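/- Let H be a (j+p)×j real matrix of full column rank j that is banded with bandwidth p, i.e. H_{i,ℓ} = 0 whenever |i − ℓ| > p. Suppose H = Q R̄ where Q is a (j+p)×(j+p) orthogonal matrix and R̄ = [R; 0_{p×j}] with R ∈ ℝ^{j×j} upper triangular with strictly positive diagonal entries. Then R has at most 2p nonzero superdiagonals per column: R_{i,ℓ} = 0 whenever ℓ > i + 2p. -/

import Mathlib

open Matrix

/-- The upper triangular factor in a QR factorization of a full-rank banded matrix with
bandwidth `p` has at most `2p` nonzero superdiagonals: `R_{i,ℓ} = 0` whenever
`ℓ > i + 2p`. -/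
theorem qr_band_structure {j p : ℕ} (H : Matrix (Fin (j + p)) (Fin j) ℝ)
    (hrank : H.rank = j)
    (hband : ∀ (i : Fin (j + p)) (l : Fin j), (p : ℤ) < |(i : ℤ) - (l : ℤ)| → H i l = 0)
    (Q : Matrix (Fin (j + p)) (Fin (j + p)) ℝ) (hQ : Qᵀ * Q = 1)
    (R : Matrix (Fin j) (Fin j) ℝ)
    (hRtri : ∀ i l : Fin j, (l : ℕ) < (i : ℕ) → R i l = 0)
    (hRdiag : ∀ i : Fin j, 0 < R i i)
    (Rbar : Matrix (Fin (j + p)) (Fin j) ℝ)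
    (hRbar : Rbar = fun (i : Fin (j + p)) (l : Fin j) =>
      if h : (i : ℕ) < j then R ⟨(i : ℕ), h⟩ l else 0)
    (hQR : H = Q * Rbar) :
    ∀ i l : Fin j, (i : ℕ) + 2 * p < (l : ℕ) → R i l = 0 := by
  -- HᵀH = RᵀR
  have h1 : Hᵀ * H = Rbarᵀ * Rbar := by
    rw [hQR, transpose_mul, Matrix.mul_assoc, ← Matrix.mul_assoc Qᵀ, hQ, Matrix.one_mul]
  have h2 : Rbarᵀ * Rbar = Rᵀ * R := by
    ext k l
    simp only [mul_apply, transpose_apply]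
    simp only [hRbar]
    rw [Fin.sum_univ_add]
    simp
  have hA : Rᵀ * R = Hᵀ * H := by rw [h1, h2]
  -- bandedness of HᵀH
  have hHband : ∀ i l : Fin j, (i : ℕ) + 2 * p < (l : ℕ) → (Hᵀ * H) i l = 0 := by
    intro i l hl
    rw [mul_apply]
    apply Finset.sum_eq_zero
    intro m _
    rw [transpose_apply]
    by_cases hm : (p : ℤ) < |(m : ℤ) - (i : ℤ)|
    · rw [hband m i hm, zero_mul]
    · have h2 := abs_le.mp (not_lt.mp hm)
      have hml : (p : ℤ) < (l : ℤ) - (m : ℤ) := by omega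
      have habs : (p : ℤ) < |(m : ℤ) - (l : ℤ)| := by
        rw [abs_sub_comm]
        exact lt_of_lt_of_le hml (le_abs_self _)
      rw [hband m l habs, mul_zero]
  -- strong induction
  have key : ∀ n : ℕ, ∀ i l : Fin j, (i : ℕ) = n → (i : ℕ) + 2 * p < (l : ℕ) → R i l = 0 := by
    intro n
    induction n using Nat.strong_induction_on with
    | _ n ih =>
      intro i l hn hl
      have hAil : (Rᵀ * R) i l = 0 := by rw [hA]; exact hHband i l hl
      rw [mul_apply] at hAil
      have hsum : ∑ k, Rᵀ i k * R k l = R i i * R i l := by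
        apply Finset.sum_eq_single i
        · intro k _ hk
          rcases lt_or_gt_of_ne (fun h : (k : ℕ) = (i : ℕ) => hk (Fin.ext h)) with h | h
          · rw [ih k (hn ▸ h) k l rfl (by omega), mul_zero]
          · rw [transpose_apply, hRtri k i h, zero_mul]
        · intro h; exact absurd (Finset.mem_univ i) h
      rw [hsum] at hAil
      exact (mul_eq_zero.mp hAil).resolve_left (ne_of_gt (hRdiag i))
  intro i l hl
  exact key (i : ℕ) i l rfl hl
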